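/- Let V be a complex inner product space, Ω ∈ V, and let (L_n)_{n∈ℤ} and (L̃_n)_{n∈ℤ} be two families of linear endomorphisms of V such that: (i) ⟨L_n u, v⟩ = ⟨u, L_{−n} v⟩ and ⟨L̃_n u, v⟩ = ⟨u, L̃_{−n} v⟩ for all u, v ∈ V and n ∈ ℤ; (ii) ⁅L_j, L_n⁆ = (j−n)·L_{j+n} and ⁅L̃_j, L̃_n⁆ = (j−n)·L̃_{j+n} for all j ∈ {−1, 0, 1} and n ∈ ℤ; (iii) L_j = L̃_j for j ∈ {−1, 0, 1}; (iv) ⁅L_2, L_{−1}⁆ = 3·L_1; (v) L_j Ω = 0 for j ∈ {−1, 0, 1}; (vi) ⟨v, L_0 v⟩ ≥ 0 for all v ∈ V. Then ⁅L_2, L̃_{−n}⁆ Ω = (2+n)·L̃_{−n+2} Ω for every integer n ≥ 3. -/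

import Mathlib

open scoped ComplexOrder

/-- Unfold a commutator identity `⁅A,B⁆ = c • C` pointwise. -/
lemma commApply {V : Type*} [AddCommGroup V] [Module ℂ V] {A B C : Module.End ℂ V} {c : ℂ}
    (h : ⁅A, B⁆ = c • C) (v : V) : A (B v) = c • C v + B (A v) := by
  have h' := congrArg (fun T : Module.End ℂ V => T v) h
  simp only [Ring.lie_def, LinearMap.sub_apply, Module.End.mul_apply, LinearMap.smul_apply] at h'
  exact sub_eq_iff_eq_add.mp h'

/-- Key algebraic step (Lüscher–Mack style) toward the uniqueness of
diffeomorphism symmetry: for two hermitian dimension-2 Möbius covariant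
families `L`, `L'` with the same Möbius part annihilating the vacuum `Ω`,
one has `[L₂, L'₋ₙ] Ω = (2+n) L'₋ₙ₊₂ Ω` for all `n ≥ 3`. -/
theorem luscher_mack_commutator_on_vacuum
    {V : Type*} [NormedAddCommGroup V] [InnerProductSpace ℂ V]
    (Ω : V) (L L' : ℤ → Module.End ℂ V)
    (hermL : ∀ (n : ℤ) (u v : V), (inner ℂ ((L n) u) v : ℂ) = inner ℂ u ((L (-n)) v))
    (hermL' : ∀ (n : ℤ) (u v : V), (inner ℂ ((L' n) u) v : ℂ) = inner ℂ u ((L' (-n)) v))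
    (hmobL : ∀ j ∈ ({-1, 0, 1} : Set ℤ), ∀ n : ℤ,
      ⁅L j, L n⁆ = ((j - n : ℤ) : ℂ) • L (j + n))
    (hmobL' : ∀ j ∈ ({-1, 0, 1} : Set ℤ), ∀ n : ℤ,
      ⁅L' j, L' n⁆ = ((j - n : ℤ) : ℂ) • L' (j + n))
    (heq : ∀ j ∈ ({-1, 0, 1} : Set ℤ), L j = L' j)
    (hcomm : ⁅L 2, L (-1)⁆ = (3 : ℂ) • L 1)
    (hvac : ∀ j ∈ ({-1, 0, 1} : Set ℤ), (L j) Ω = 0)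
    (hpos : ∀ v : V, (0 : ℂ) ≤ inner ℂ v ((L 0) v)) :
    ∀ n : ℤ, 3 ≤ n → (⁅L 2, L' (-n)⁆) Ω = ((2 + n : ℤ) : ℂ) • (L' (-n + 2)) Ω := by
  have hm1 : (-1 : ℤ) ∈ ({-1, 0, 1} : Set ℤ) := by simp
  have h0 : (0 : ℤ) ∈ ({-1, 0, 1} : Set ℤ) := by simp
  have h1 : (1 : ℤ) ∈ ({-1, 0, 1} : Set ℤ) := by simp
  have hΩ0 : (L 0) Ω = 0 := hvac 0 h0
  have hΩ'm1 : (L' (-1)) Ω = 0 := by rw [← heq (-1) hm1]; exact hvac (-1) hm1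
  -- Positivity kills vectors of negative `L 0`-eigenvalue.
  have hkill : ∀ (c : ℝ), c < 0 → ∀ y : V, (L 0) y = (c : ℂ) • y → y = 0 := by
    intro c hc y hy
    have h1' := hpos y
    rw [hy, inner_smul_right] at h1'
    rw [inner_self_eq_norm_sq_to_K] at h1'
    have h2 : (0:ℝ) ≤ c * ‖y‖^2 := by
      have h1'' : (0:ℂ) ≤ ((c * ‖y‖^2 : ℝ) : ℂ) := by
        rw [Complex.ofReal_mul, Complex.ofReal_pow]; exact h1'
      exact Complex.zero_le_real.mp h1''
    have h5 : ‖y‖^2 ≤ 0 := by nlinarith [sq_nonneg ‖y‖]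
    have h6 : ‖y‖ = 0 := by nlinarith [norm_nonneg y, sq_nonneg ‖y‖]
    simpa using h6
  -- Möbius action on vectors `L' m Ω`.
  have appL' : ∀ j ∈ ({-1, 0, 1} : Set ℤ), ∀ m : ℤ,
      (L j) ((L' m) Ω) = ((j - m : ℤ) : ℂ) • (L' (j + m)) Ω := by
    intro j hj m
    have e1 : L j = L' j := heq j hj
    have e2 := commApply (hmobL' j hj m) Ω
    have e3 : (L' j) Ω = 0 := by rw [← e1]; exact hvac j hj
    rw [e1, e2, e3, map_zero, add_zero]
  -- Named commutators.
  have cm12 : ⁅L (-1), L 2⁆ = ((-3 : ℤ) : ℂ) • L 1 := by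
    have := hmobL (-1) hm1 2; norm_num at this ⊢; exact this
  have c02 : ⁅L 0, L 2⁆ = ((-2 : ℤ) : ℂ) • L 2 := by
    have := hmobL 0 h0 2; norm_num at this ⊢; exact this
  have c03 : ⁅L 0, L 3⁆ = ((-3 : ℤ) : ℂ) • L 3 := by
    have := hmobL 0 h0 3; norm_num at this ⊢; exact this
  have c12 : ⁅L 1, L 2⁆ = ((-1 : ℤ) : ℂ) • L 3 := by
    have := hmobL 1 h1 2; norm_num at this ⊢; exact this
  have c1m1 : ⁅L 1, L (-1)⁆ = ((2 : ℤ) : ℂ) • L 0 := by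
    have := hmobL 1 h1 (-1); norm_num at this ⊢; exact this
  -- `L 2 Ω = 0`.
  have hL2Ω : (L 2) Ω = 0 := by
    apply hkill (-2) (by norm_num)
    have := commApply c02 Ω
    rw [hΩ0, map_zero, add_zero] at this
    rw [this]; norm_num
  -- `u := L' (-2) Ω`; first show `L 3 u = 0` by positivity.
  have hu0 : (L 0) ((L' (-2)) Ω) = (2 : ℂ) • (L' (-2)) Ω := by
    have := appL' 0 h0 (-2); norm_num at this; exact this
  have hu1 : (L 1) ((L' (-2)) Ω) = 0 := by
    have := appL' 1 h1 (-2)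
    norm_num at this
    rw [this, hΩ'm1, smul_zero]
  have hL3u : (L 3) ((L' (-2)) Ω) = 0 := by
    apply hkill (-1) (by norm_num)
    have e := commApply c03 ((L' (-2)) Ω)
    rw [hu0, map_smul] at e
    rw [e]
    push_cast
    module
  -- `w := L 2 (L' (-2) Ω)`.  We show `L 1 w = 0`, `L 0 w = 0`, then `L (-1) w = 0`.
  have hw1 : (L 1) ((L 2) ((L' (-2)) Ω)) = 0 := by
    have e := commApply c12 ((L' (-2)) Ω)
    rw [hu1, map_zero, add_zero, hL3u, smul_zero] at e
    exact e
  have hw0 : (L 0) ((L 2) ((L' (-2)) Ω)) = 0 := by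
    have e := commApply c02 ((L' (-2)) Ω)
    rw [hu0, map_smul] at e
    rw [e]
    push_cast
    module
  have hwm1 : (L (-1)) ((L 2) ((L' (-2)) Ω)) = 0 := by
    set w := (L 2) ((L' (-2)) Ω) with hw
    have e : (inner ℂ ((L (-1)) w) ((L (-1)) w) : ℂ) = 0 := by
      have e1 := hermL (-1) w ((L (-1)) w)
      rw [neg_neg] at e1
      rw [e1]
      have e3 : (L 1) ((L (-1)) w) = 0 := by
        have e4 := commApply c1m1 w
        rw [hw0, smul_zero, zero_add, hw1, map_zero] at e4
        exact e4
      rw [e3, inner_zero_right]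
    exact inner_self_eq_zero.mp e
  -- the key product identity, by induction on `n ≥ 3`
  have key : ∀ n : ℤ, 3 ≤ n →
      (L 2) ((L' (-n)) Ω) = ((2 + n : ℤ) : ℂ) • (L' (-n + 2)) Ω := by
    intro n
    refine Int.le_induction (m := 3) (motive := fun n _ => (L 2) ((L' (-n)) Ω) = ((2 + n : ℤ) : ℂ) • (L' (-n + 2)) Ω) ?_ ?_ n
    · show (L 2) ((L' (-3)) Ω) = ((2 + 3 : ℤ) : ℂ) • (L' (-3 + 2)) Ω
      -- `L 2 (L' (-3) Ω) = 0 = 5 • L' (-1) Ω`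
      have e := commApply cm12 ((L' (-2)) Ω)
      rw [hu1, smul_zero, zero_add] at e
      have e2 : (L (-1)) ((L' (-2)) Ω) = (L' (-3)) Ω := by
        have := appL' (-1) hm1 (-2)
        norm_num at this
        rw [this]
      rw [e2, hwm1] at e
      rw [show (-3 : ℤ) + 2 = (-1 : ℤ) from by norm_num, hΩ'm1, smul_zero]
      exact e.symm
    · intro n hn ih
      show (L 2) ((L' (-(n + 1))) Ω) = ((2 + (n + 1) : ℤ) : ℂ) • (L' (-(n + 1) + 2)) Ω
      -- apply `L (-1)` to the induction hypothesis
      have hA : (L 1) ((L' (-n)) Ω) = ((1 + n : ℤ) : ℂ) • (L' (1 - n)) Ω := by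
        have := appL' 1 h1 (-n)
        rw [show (1 : ℤ) + -n = 1 - n from by ring, show (1 : ℤ) - -n = 1 + n from by ring] at this
        exact this
      have hB : (L (-1)) ((L' (-n)) Ω) = ((n - 1 : ℤ) : ℂ) • (L' (-(n + 1))) Ω := by
        have := appL' (-1) hm1 (-n)
        rw [show (-1 : ℤ) + -n = -(n + 1) from by ring,
          show (-1 : ℤ) - -n = n - 1 from by ring] at this
        exact this
      have hC : (L (-1)) ((L' (-n + 2)) Ω) = ((n - 3 : ℤ) : ℂ) • (L' (1 - n)) Ω := by
        have := appL' (-1) hm1 (-n + 2)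
        rw [show (-1 : ℤ) + (-n + 2) = 1 - n from by ring,
          show (-1 : ℤ) - (-n + 2) = n - 3 from by ring] at this
        exact this
      have e := commApply cm12 ((L' (-n)) Ω)
      rw [hA, hB, ih, map_smul, map_smul, hC] at e
      -- e : (2+n) • ((n-3) • Y) = (-3) • ((1+n) • Y) + (n-1) • X
      have hne : ((n : ℂ) - 1) ≠ 0 := by
        have hn1 : (n : ℂ) ≠ 1 := by
          exact_mod_cast (show (n : ℂ) ≠ ((1 : ℤ) : ℂ) by exact_mod_cast
            (fun h => by omega : n ≠ 1))
        exact sub_ne_zero.mpr hn1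
      rw [show -(n + 1) + 2 = 1 - n from by ring]
      apply smul_right_injective V hne
      push_cast at e ⊢
      rw [smul_smul, smul_smul] at e
      rw [eq_comm, add_comm, ← eq_sub_iff_add_eq, ← sub_smul] at e
      rw [smul_smul, e]
      congr 1
      ring
  intro n hn
  have hfinal := key n hn
  have : (⁅L 2, L' (-n)⁆) Ω = (L 2) ((L' (-n)) Ω) - (L' (-n)) ((L 2) Ω) := by
    simp [Ring.lie_def, LinearMap.sub_apply, Module.End.mul_apply]
  rw [this, hL2Ω, map_zero, sub_zero, hfinal]
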